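/- If p is a permutation with p_1 = 2, then there exists a single block move that decreases the number of bad pairs of p by two, namely interchanging the block p_1 p_2 ... p_{i-1} with the single-entry block p_i = 1, where i is the position of the entry 1. -/

import Mathlib

/-- Number of descents of a list (one-line notation). -/
def desNum (p : List ℕ) : ℕ :=
  ((Finset.range (p.length - 1)).filter (fun i => p.getD (i+1) 0 < p.getD i 0)).card

/-- The extension of `p` by a leading `0` and trailing `n+1`. -/
def extList (p : List ℕ) : List ℕ := 0 :: (p ++ [p.length + 1])

/-- Number of bad pairs of `p`. -/
def badNum (p : List ℕ) : ℕ :=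
  ((Finset.range (p.length + 1)).filter
    (fun i => (extList p).getD i 0 + 1 ≠ (extList p).getD (i+1) 0)).card

/-- `q` is obtained from `p` by one block move: interchanging two disjoint
nonempty blocks of consecutive entries. -/
def IsBlockMove (p q : List ℕ) : Prop :=
  ∃ A X B Y C : List ℕ, X ≠ [] ∧ Y ≠ [] ∧
    p = A ++ X ++ B ++ Y ++ C ∧ q = A ++ Y ++ B ++ X ++ C

/-- `p` is a permutation of `{1,…,n}` in one-line notation. -/
def IsPermList (p : List ℕ) : Prop := p.Perm (List.range' 1 p.length)

/-- `p` can be sorted to the identity `1 2 … n` using at most `k` block moves. -/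
def SortableIn (p : List ℕ) (k : ℕ) : Prop :=
  ∃ m ≤ k, ∃ f : ℕ → List ℕ, f 0 = p ∧ f m = List.range' 1 p.length ∧
    ∀ i < m, IsBlockMove (f i) (f (i+1))

lemma aux_getD_drop (l : List ℕ) (i k : ℕ) :
    (l.drop i).getD k 0 = l.getD (i + k) 0 := by
  rcases lt_or_ge (i + k) l.length with h | h
  · rw [List.getD_eq_getElem _ _ (by simp only [List.length_drop]; omega),
      List.getD_eq_getElem _ _ h, List.getElem_drop]
  · rw [List.getD_eq_default _ _ (by simp only [List.length_drop]; omega),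
      List.getD_eq_default _ _ h]

lemma aux_getD_take (l : List ℕ) {i k : ℕ} (hk : k < i) :
    (l.take i).getD k 0 = l.getD k 0 := by
  rcases lt_or_ge k l.length with h | h
  · rw [List.getD_eq_getElem _ _ (by simp only [List.length_take]; omega),
      List.getD_eq_getElem _ _ h, List.getElem_take]
  · rw [List.getD_eq_default _ _ (by simp only [List.length_take]; omega),
      List.getD_eq_default _ _ h]

lemma aux_ext_zero (l : List ℕ) : (extList l).getD 0 0 = 0 := rfl

lemma aux_ext_succ (l : List ℕ) {k : ℕ} (h : k < l.length) :
    (extList l).getD (k+1) 0 = l.getD k 0 := by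
  simp only [extList, List.getD_cons_succ]
  exact List.getD_append _ _ _ _ h

lemma aux_ext_last (l : List ℕ) :
    (extList l).getD (l.length + 1) 0 = l.length + 1 := by
  simp only [extList, List.getD_cons_succ]
  rw [List.getD_append_right _ _ _ _ (le_refl _)]
  simp

lemma aux_ext_mid (l : List ℕ) {i : ℕ} (h1 : 1 ≤ i) (h2 : i ≤ l.length) :
    (extList l).getD i 0 = l.getD (i-1) 0 := by
  obtain ⟨k, rfl⟩ : ∃ k, i = k + 1 := ⟨i - 1, by omega⟩
  rw [aux_ext_succ l (by omega)]
  norm_num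


set_option maxHeartbeats 2000000 in
/-- If `p₁ = 2`, the block move interchanging the initial block before the
entry `1` with the entry `1` decreases the number of bad pairs by two. -/
theorem first_entry_two (p : List ℕ) (hp : IsPermList p) (hn : 2 ≤ p.length)
    (h1 : p.getD 0 0 = 2) (j : ℕ) (hj : p.idxOf 1 = j) :
    IsBlockMove p ([1] ++ p.take j ++ p.drop (j+1)) ∧
    badNum ([1] ++ p.take j ++ p.drop (j+1)) + 2 ≤ badNum p := by
  set n := p.length with hn'
  have hone : (1:ℕ) ∈ p := by
    rw [hp.mem_iff, List.mem_range']
    exact ⟨0, by omega, by norm_num⟩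
  have hjlt : j < n := by rw [← hj]; exact List.idxOf_lt_length_iff.mpr hone
  have hpj : p.getD j 0 = 1 := by
    have h := List.getD_eq_getElem p 0 (List.idxOf_lt_length_iff.mpr hone)
    rw [List.getElem_idxOf] at h
    rw [hj] at h
    exact h
  have hj1 : 1 ≤ j := by
    rcases Nat.eq_zero_or_pos j with h | h
    · rw [h] at hpj; omega
    · exact h
  have hnodup : p.Nodup := hp.nodup_iff.mpr (List.nodup_range')
  have hmem1 : ∀ x ∈ p, 1 ≤ x := by
    intro x hx
    rw [hp.mem_iff, List.mem_range'] at hx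
    obtain ⟨i, _, rfl⟩ := hx; omega
  set q : List ℕ := [1] ++ p.take j ++ p.drop (j+1) with hqdef
  have hqlen : q.length = n := by
    simp only [hqdef, List.length_append, List.length_take, List.length_drop,
      List.length_cons, List.length_nil]
    omega
  have hq0 : q.getD 0 0 = 1 := rfl
  have hqlow : ∀ k, k < j → q.getD (k+1) 0 = p.getD k 0 := by
    intro k hk
    have hq : q = (1 :: p.take j) ++ p.drop (j+1) := by rw [hqdef]; simp
    rw [hq, List.getD_append _ _ _ _
      (by simp only [List.length_cons, List.length_take]; omega),
      List.getD_cons_succ, aux_getD_take _ hk]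
  have hqhigh : ∀ k, j ≤ k → q.getD (k+1) 0 = p.getD (k+1) 0 := by
    intro k hk
    have hq : q = (1 :: p.take j) ++ p.drop (j+1) := by rw [hqdef]; simp
    have hlen : (1 :: p.take j).length = j + 1 := by
      simp only [List.length_cons, List.length_take]; omega
    rw [hq, List.getD_append_right _ _ _ _ (by omega), hlen, aux_getD_drop]
    congr 1
    omega
  -- the block move
  have hsplit : p = p.take j ++ [1] ++ p.drop (j+1) := by
    have hget : p[j] = 1 := by
      rw [List.getD_eq_getElem _ _ hjlt] at hpj; exact hpj
    calc p = p.take j ++ p.drop j := (List.take_append_drop j p).symm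
      _ = p.take j ++ (p[j] :: p.drop (j+1)) := by rw [← List.drop_eq_getElem_cons hjlt]
      _ = p.take j ++ [1] ++ p.drop (j+1) := by rw [hget]; simp
  constructor
  · refine ⟨[], p.take j, [], [1], p.drop (j+1), ?_, by simp,
      by simpa using hsplit, by rw [hqdef]; simp⟩
    have hlt : (p.take j).length = j := by simp only [List.length_take]; omega
    intro h
    rw [h] at hlt
    simp at hlt
    omega
  -- bad pair counting
  set Sp := ((Finset.range (n + 1)).filter
    (fun i => (extList p).getD i 0 + 1 ≠ (extList p).getD (i+1) 0)) with hSp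
  set Sq := ((Finset.range (n + 1)).filter
    (fun i => (extList q).getD i 0 + 1 ≠ (extList q).getD (i+1) 0)) with hSq
  have hbq : badNum q = Sq.card := by rw [badNum, hqlen]
  have hbp : badNum p = Sp.card := rfl
  set φ : ℕ → ℕ := fun i => if i ≤ j + 1 then i - 1 else i with hφ
  have hE : ∀ i, 1 ≤ i → i ≤ n → (extList p).getD i 0 = p.getD (i-1) 0 :=
    fun i a b => aux_ext_mid p a b
  have hF : ∀ i, 1 ≤ i → i ≤ n → (extList q).getD i 0 = q.getD (i-1) 0 := by
    intro i a b
    exact aux_ext_mid q a (by rw [hqlen]; exact b)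
  have hEl : (extList p).getD (n+1) 0 = n+1 := aux_ext_last p
  have hFl : (extList q).getD (n+1) 0 = n+1 := by
    rw [← hqlen]; exact aux_ext_last q
  have hgetmem : ∀ k, k < n → 1 ≤ p.getD k 0 := by
    intro k hk
    rw [List.getD_eq_getElem _ _ hk]
    exact hmem1 _ (List.getElem_mem _)
  have htwo : ∀ i ∈ Sq, 2 ≤ i := by
    intro i hi
    simp only [hSq, Finset.mem_filter, Finset.mem_range] at hi
    by_contra hlt
    interval_cases i
    · apply hi.2
      have e : (extList q).getD (0+1) 0 = q.getD 0 0 := hF (0+1) (by omega) (by omega)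
      rw [e, hq0]
      rfl
    · apply hi.2
      have e1 : (extList q).getD 1 0 = q.getD 0 0 := hF 1 (by omega) (by omega)
      have e2 : (extList q).getD (1+1) 0 = q.getD 1 0 := hF (1+1) (by omega) (by omega)
      have e3 : q.getD 1 0 = p.getD 0 0 := hqlow 0 hj1
      rw [e1, e2, e3, hq0, h1]
  have key : ∀ i ∈ Sq, φ i ∈ Sp := by
    intro i hi
    have h2 := htwo i hi
    simp only [hSq, Finset.mem_filter, Finset.mem_range] at hi
    obtain ⟨hin, hbad⟩ := hi
    obtain ⟨k, rfl⟩ : ∃ k, i = k + 2 := ⟨i - 2, by omega⟩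
    simp only [hSp, Finset.mem_filter, Finset.mem_range, hφ]
    rcases lt_trichotomy (k + 2) (j + 1) with hc | hc | hc
    · -- k + 2 ≤ j : identical pair, shifted by one
      rw [if_pos (by omega)]
      refine ⟨by omega, ?_⟩
      show (extList p).getD (k+1) 0 + 1 ≠ (extList p).getD (k+2) 0
      rw [hE (k+1) (by omega) (by omega), hE (k+2) (by omega) (by omega)]
      show p.getD k 0 + 1 ≠ p.getD (k+1) 0
      have a1 : q.getD (k+1) 0 = p.getD k 0 := hqlow k (by omega)
      have a2 : q.getD (k+2) 0 = p.getD (k+1) 0 := hqlow (k+1) (by omega)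
      rw [← a1, ← a2]
      rw [hF (k+2) (by omega) (by omega), hF (k+2+1) (by omega) (by omega)] at hbad
      exact hbad
    · -- k + 1 = j : maps to the always-bad pair (p_{j-1}, 1)
      rw [if_pos (by omega)]
      refine ⟨by omega, ?_⟩
      show (extList p).getD (k+1) 0 + 1 ≠ (extList p).getD (k+2) 0
      rw [hE (k+1) (by omega) (by omega), hE (k+2) (by omega) (by omega)]
      show p.getD k 0 + 1 ≠ p.getD (k+1) 0
      have e : p.getD (k+1) 0 = 1 := by rw [show k+1 = j from by omega]; exact hpj
      have := hgetmem k (by omega)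
      omega
    · -- j ≤ k : identical pair at the same position
      rw [if_neg (by omega)]
      refine ⟨hin, ?_⟩
      have a1 : q.getD (k+1) 0 = p.getD (k+1) 0 := hqhigh k (by omega)
      rcases lt_or_eq_of_le (show k + 2 ≤ n from by omega) with hlt | heq
      · rw [hE (k+2) (by omega) (by omega), hE (k+2+1) (by omega) (by omega)]
        show p.getD (k+1) 0 + 1 ≠ p.getD (k+2) 0
        have a2 : q.getD (k+2) 0 = p.getD (k+2) 0 := hqhigh (k+1) (by omega)
        rw [← a1, ← a2]
        rw [hF (k+2) (by omega) (by omega), hF (k+2+1) (by omega) (by omega)] at hbad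
        exact hbad
      · rw [hE (k+2) (by omega) (by omega), show k+2+1 = n+1 from by omega, hEl]
        show p.getD (k+1) 0 + 1 ≠ n + 1
        rw [← a1]
        rw [hF (k+2) (by omega) (by omega),
          show k+2+1 = n+1 from by omega, hFl] at hbad
        exact hbad
  have hinj : Set.InjOn φ ↑Sq := by
    intro a ha b hb hab
    have h2a := htwo a ha
    have h2b := htwo b hb
    simp only [hφ] at hab
    split_ifs at hab <;> omega
  have h0mem : 0 ∈ Sp := by
    simp only [hSp, Finset.mem_filter, Finset.mem_range]
    refine ⟨by omega, ?_⟩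
    have e : (extList p).getD (0+1) 0 = p.getD 0 0 := hE (0+1) (by omega) (by omega)
    rw [e, h1, aux_ext_zero]
    omega
  have hj1mem : j + 1 ∈ Sp := by
    simp only [hSp, Finset.mem_filter, Finset.mem_range]
    refine ⟨by omega, ?_⟩
    have e1 : (extList p).getD (j+1) 0 = p.getD j 0 := hE (j+1) (by omega) (by omega)
    rw [e1, hpj]
    rcases lt_or_eq_of_le (show j + 1 ≤ n from hjlt) with hlt | heq
    · have e2 : (extList p).getD (j+1+1) 0 = p.getD (j+1) 0 :=
        hE (j+1+1) (by omega) (by omega)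
      rw [e2]
      intro hcon
      rw [List.getD_eq_getElem _ _ (show j+1 < p.length from hlt)] at hcon
      have h1' : p[0] = 2 := by
        rw [List.getD_eq_getElem _ _ (show 0 < p.length from by omega)] at h1
        exact h1
      have hpp : p[j+1] = p[0] := by rw [← hcon, h1']
      have := hnodup.getElem_inj_iff.mp hpp
      omega
    · rw [show j+1+1 = n+1 from by omega, hEl]
      omega
  have himg0 : (0:ℕ) ∉ insert (j+1) (Sq.image φ) := by
    intro hmem
    rcases Finset.mem_insert.mp hmem with h | h
    · omega
    · obtain ⟨i, hi, hphi⟩ := Finset.mem_image.mp h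
      have := htwo i hi
      simp only [hφ] at hphi
      split_ifs at hphi <;> omega
  have himgj : (j+1) ∉ Sq.image φ := by
    intro hmem
    obtain ⟨i, hi, hphi⟩ := Finset.mem_image.mp hmem
    have := htwo i hi
    simp only [hφ] at hphi
    split_ifs at hphi <;> omega
  have hsub : insert 0 (insert (j+1) (Sq.image φ)) ⊆ Sp := by
    intro x hx
    rcases Finset.mem_insert.mp hx with rfl | hx
    · exact h0mem
    · rcases Finset.mem_insert.mp hx with rfl | hx
      · exact hj1mem
      · obtain ⟨i, hi, rfl⟩ := Finset.mem_image.mp hx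
        exact key i hi
  calc badNum q + 2 = (insert 0 (insert (j+1) (Sq.image φ))).card := by
        rw [Finset.card_insert_of_notMem himg0, Finset.card_insert_of_notMem himgj,
          Finset.card_image_of_injOn hinj, hbq]
    _ ≤ Sp.card := Finset.card_le_card hsub
    _ = badNum p := hbp.symm
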